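/- arXiv:2002.05056 — 9 statements merged into one kernel-verified Lean document; each statement's English description precedes it below -/
import Mathlib

section
/- Let S be a finite set, D : S → [0,∞) with Σ_{x∈S} D(x) = 1, and h, c : S → {-1,1}; let ε̃ := Σ_{x : h(x) ≠ c(x)} D(x). Let 0 ≤ δ ≤ 1 and ε' ∈ (0, 2/3] satisfy |ε̃ - ε'| ≤ δ·ε', set α' := (1/2)·ln((1-ε')/ε'), and define D'(x) := D(x)·exp(-α'·c(x)·h(x)) / (2·(1+2δ)·√(ε'·(1-ε'))). Then 1 - 4δ ≤ Σ_{x∈S} D'(x) ≤ 1. -/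
/-- 'Yes'-instance normalization claim: the modified AdaBoost distribution
    update with approximate normalizer 2(1+2δ)√(ε'(1-ε')) has total mass in
    [1-4δ, 1]. -/
theorem yes_instance_mass {α : Type*} (S : Finset α) (D h c : α → ℝ)
    (hD : ∀ x ∈ S, 0 ≤ D x) (hsum : ∑ x ∈ S, D x = 1)
    (hh : ∀ x ∈ S, h x = 1 ∨ h x = -1) (hc : ∀ x ∈ S, c x = 1 ∨ c x = -1)
    (δ ε' : ℝ) (hδ0 : 0 ≤ δ) (hδ1 : δ ≤ 1) (hε'0 : 0 < ε') (hε'1 : ε' ≤ 2 / 3)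
    (happ : |(∑ x ∈ S.filter (fun x => h x ≠ c x), D x) - ε'| ≤ δ * ε')
    (α' : ℝ) (hα' : α' = (1 / 2) * Real.log ((1 - ε') / ε'))
    (D' : α → ℝ)
    (hD' : ∀ x ∈ S, D' x =
      D x * Real.exp (-α' * c x * h x)
        / (2 * (1 + 2 * δ) * Real.sqrt (ε' * (1 - ε')))) :
    1 - 4 * δ ≤ ∑ x ∈ S, D' x ∧ ∑ x ∈ S, D' x ≤ 1 := by
  have hε1 : ε' < 1 := by linarith
  have ha : (0:ℝ) < Real.sqrt ε' := Real.sqrt_pos.mpr hε'0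
  have hb : (0:ℝ) < Real.sqrt (1 - ε') := Real.sqrt_pos.mpr (by linarith)
  set a := Real.sqrt ε' with haa
  set b := Real.sqrt (1 - ε') with hbb
  have ha2 : a ^ 2 = ε' := Real.sq_sqrt hε'0.le
  have hb2 : b ^ 2 = 1 - ε' := Real.sq_sqrt (by linarith)
  have hab : Real.sqrt (ε' * (1 - ε')) = a * b := Real.sqrt_mul hε'0.le _
  set Z := 2 * (1 + 2 * δ) * Real.sqrt (ε' * (1 - ε')) with hZ
  have hZ' : Z = 2 * (1 + 2 * δ) * (a * b) := by rw [hZ, hab]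
  have hZpos : 0 < Z := by
    rw [hZ']
    have h2 : (0:ℝ) < 2 * (1 + 2 * δ) := by linarith
    exact mul_pos h2 (mul_pos ha hb)
  have hexp : Real.exp α' = b / a := by
    rw [hα']
    have hr : (0:ℝ) < (1 - ε') / ε' := div_pos (by linarith) hε'0
    have : Real.exp (1 / 2 * Real.log ((1 - ε') / ε')) =
        ((1 - ε') / ε') ^ ((1:ℝ) / 2) := by
      rw [Real.rpow_def_of_pos hr]; ring_nf
    rw [this, ← Real.sqrt_eq_rpow, Real.sqrt_div (by linarith : (0:ℝ) ≤ 1 - ε') ε']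
  have hexp' : Real.exp (-α') = a / b := by
    rw [Real.exp_neg, hexp, inv_div]
  set e := ∑ x ∈ S.filter (fun x => h x ≠ c x), D x with he
  have hcorr : ∑ x ∈ S.filter (fun x => ¬ h x ≠ c x), D x = 1 - e := by
    have h0 := Finset.sum_filter_add_sum_filter_not S (fun x => h x ≠ c x) D
    rw [hsum] at h0
    linarith
  have key : ∑ x ∈ S, D' x = (e * (b / a) + (1 - e) * (a / b)) / Z := by
    rw [← Finset.sum_filter_add_sum_filter_not S (fun x => h x ≠ c x) D']
    have h1 : ∑ x ∈ S.filter (fun x => h x ≠ c x), D' x = e * (b / a) / Z := by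
      rw [he, Finset.sum_mul, Finset.sum_div]
      apply Finset.sum_congr rfl
      intro x hx
      simp only [Finset.mem_filter] at hx
      rw [hD' x hx.1]
      have : -α' * c x * h x = α' := by
        rcases hc x hx.1 with h1 | h1 <;> rcases hh x hx.1 with h2 | h2 <;>
          rw [h1, h2] at hx ⊢ <;>
          first | exact absurd rfl hx.2 | ring1
      rw [this, hexp]
    have h2 : ∑ x ∈ S.filter (fun x => ¬ h x ≠ c x), D' x = (1 - e) * (a / b) / Z := by
      rw [← hcorr, Finset.sum_mul, Finset.sum_div]
      apply Finset.sum_congr rfl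
      intro x hx
      simp only [Finset.mem_filter, not_not] at hx
      rw [hD' x hx.1]
      have : -α' * c x * h x = -α' := by
        rcases hc x hx.1 with h1 | h1 <;> rcases hh x hx.1 with h2 | h2 <;>
          rw [h1, h2] at hx ⊢ <;>
          first | ring1 | exact absurd hx.2 (by norm_num)
      rw [this, hexp']
    rw [h1, h2, add_div]
  have habs := abs_le.mp happ
  clear_value a b Z e
  have hM : ∑ x ∈ S, D' x = e / (2 * (1 + 2 * δ) * ε') +
      (1 - e) / (2 * (1 + 2 * δ) * (1 - ε')) := by
    rw [key, hZ']
    rw [← hb2, ← ha2]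
    field_simp
  rw [hM]
  have hA : (0:ℝ) < 2 * (1 + 2 * δ) := by linarith
  have h1e : (0:ℝ) < 1 - ε' := by linarith
  have hd1 : (0:ℝ) < 2 * (1 + 2 * δ) * ε' := mul_pos hA hε'0
  have hd2 : (0:ℝ) < 2 * (1 + 2 * δ) * (1 - ε') := mul_pos hA h1e
  have hub : e * (1 - ε') + (1 - e) * ε' ≤ 2 * (1 + 2 * δ) * (ε' * (1 - ε')) := by
    rcases le_or_gt 0 (1 - 2 * ε') with hs | hs
    · linarith [mul_le_mul_of_nonneg_right habs.2 hs,
        mul_nonneg (mul_nonneg hδ0 hε'0.le) (show (0:ℝ) ≤ 3 - 2 * ε' by linarith)]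
    · linarith [mul_le_mul_of_nonpos_right habs.1 hs.le,
        mul_nonneg (mul_nonneg hδ0 hε'0.le) (show (0:ℝ) ≤ 5 - 6 * ε' by linarith)]
  have hlb : (1 - 4 * δ) * (2 * (1 + 2 * δ) * (ε' * (1 - ε'))) ≤
      e * (1 - ε') + (1 - e) * ε' := by
    rcases le_or_gt 0 (1 - 2 * ε') with hs | hs
    · linarith [mul_le_mul_of_nonneg_right habs.1 hs,
        mul_nonneg (mul_nonneg hδ0 hε'0.le) (show (0:ℝ) ≤ 3 - 2 * ε' by linarith),
        mul_nonneg (mul_nonneg (sq_nonneg δ) hε'0.le) h1e.le]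
    · linarith [mul_le_mul_of_nonpos_right habs.2 hs.le,
        mul_nonneg (mul_nonneg hδ0 hε'0.le) (show (0:ℝ) ≤ 5 - 6 * ε' by linarith),
        mul_nonneg (mul_nonneg (sq_nonneg δ) hε'0.le) h1e.le]
  constructor
  · rw [div_add_div _ _ (ne_of_gt hd1) (ne_of_gt hd2), le_div_iff₀ (mul_pos hd1 hd2)]
    linarith [mul_le_mul_of_nonneg_left hlb hA.le]
  · rw [div_add_div _ _ (ne_of_gt hd1) (ne_of_gt hd2), div_le_one (mul_pos hd1 hd2)]
    linarith [mul_le_mul_of_nonneg_left hub hA.le]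
end

section
/- Let S be a finite set, D : S → [0,∞) with Σ_{x∈S} D(x) = 1, and h, c : S → {-1,1}; let ε̃ := Σ_{x : h(x) ≠ c(x)} D(x). Let q ≥ 2 be a real with 0 ≤ ε̃ ≤ 1/q, set ε' := 1/q, α' := (1/2)·ln(q-1), Z' := 2·(1+2/q)·√((1/q)·(1-1/q)), and define D'(x) := D(x)·(2-1/q)·exp(-α')/Z' if h(x) = c(x) and D'(x) := D(x)·(1/q)·exp(α')/Z' if h(x) ≠ c(x). Then 1 - 3/q ≤ Σ_{x∈S} D'(x) ≤ 1. -/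
/-- 'No'-instance normalization claim: the non-standard distribution update,
    used when the weighted error is at most 1/q, has total mass in
    [1 - 3/q, 1]. -/
theorem no_instance_mass {α : Type*} (S : Finset α) (D h c : α → ℝ)
    (hD : ∀ x ∈ S, 0 ≤ D x) (hsum : ∑ x ∈ S, D x = 1)
    (hh : ∀ x ∈ S, h x = 1 ∨ h x = -1) (hc : ∀ x ∈ S, c x = 1 ∨ c x = -1)
    (q : ℝ) (hq : 2 ≤ q)
    (hεt : (∑ x ∈ S.filter (fun x => h x ≠ c x), D x) ≤ 1 / q)
    (α' Z' : ℝ) (hα' : α' = (1 / 2) * Real.log (q - 1))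
    (hZ' : Z' = 2 * (1 + 2 / q) * Real.sqrt ((1 / q) * (1 - 1 / q)))
    (D' : α → ℝ)
    (hD' : ∀ x ∈ S, D' x =
      if h x = c x then D x * (2 - 1 / q) * Real.exp (-α') / Z'
      else D x * (1 / q) * Real.exp α' / Z') :
    1 - 3 / q ≤ ∑ x ∈ S, D' x ∧ ∑ x ∈ S, D' x ≤ 1 := by
  have hq0 : (0:ℝ) < q := by linarith
  have hq1 : (0:ℝ) < q - 1 := by linarith
  set E := Real.exp α' with hE
  have hEpos : 0 < E := Real.exp_pos _
  have hE2 : E * E = q - 1 := by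
    rw [hE, ← Real.exp_add, hα',
      show (1/2:ℝ) * Real.log (q-1) + (1/2) * Real.log (q-1) = Real.log (q-1) by ring]
    exact Real.exp_log hq1
  have hEneg : Real.exp (-α') = E / (q - 1) := by
    rw [Real.exp_neg, ← hE, eq_div_iff hq1.ne', ← hE2]
    field_simp
  have hsqrt : Real.sqrt ((1/q) * (1 - 1/q)) = E / q := by
    rw [show (1/q) * (1 - 1/q) = (E/q)^2 by
      field_simp
      nlinarith [hE2]]
    exact Real.sqrt_sq (by positivity)
  have hZ'' : Z' = 2 * (1 + 2/q) * (E/q) := by rw [hZ', hsqrt]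
  set e := ∑ x ∈ S.filter (fun x => h x ≠ c x), D x with he
  have he0 : 0 ≤ e :=
    Finset.sum_nonneg fun x hx => hD x (Finset.mem_filter.mp hx).1
  have hefilt : e = ∑ x ∈ S.filter (fun x => ¬ h x = c x), D x := rfl
  have hsplit := Finset.sum_filter_add_sum_filter_not S (fun x => h x = c x) D
  rw [hsum, ← hefilt] at hsplit
  have hsum' : ∑ x ∈ S.filter (fun x => h x = c x), D x = 1 - e := by linarith
  have hsum2 : ∑ x ∈ S, D' x =
      (1 - e) * ((2 - 1/q) * (E/(q-1)) / Z') + e * ((1/q) * E / Z') := by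
    rw [← Finset.sum_filter_add_sum_filter_not S (fun x => h x = c x) D']
    have h1 : ∑ x ∈ S.filter (fun x => h x = c x), D' x =
        ∑ x ∈ S.filter (fun x => h x = c x), D x * ((2 - 1/q) * (E/(q-1)) / Z') := by
      refine Finset.sum_congr rfl fun x hx => ?_
      obtain ⟨hxS, hxeq⟩ := Finset.mem_filter.mp hx
      rw [hD' x hxS, if_pos hxeq, hEneg]; ring
    have h2 : ∑ x ∈ S.filter (fun x => ¬ h x = c x), D' x =
        ∑ x ∈ S.filter (fun x => ¬ h x = c x), D x * ((1/q) * E / Z') := by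
      refine Finset.sum_congr rfl fun x hx => ?_
      obtain ⟨hxS, hxeq⟩ := Finset.mem_filter.mp hx
      rw [hD' x hxS, if_neg hxeq]; ring
    rw [h1, h2, ← Finset.sum_mul, ← Finset.sum_mul, hsum', ← hefilt]
  have hq2 : (0:ℝ) < q + 2 := by linarith
  have hT : (1 - e) * ((2 - 1/q) * (E/(q-1)) / Z') + e * ((1/q) * E / Z')
      = q * (2*q - 1 - e*q) / (2 * (q+2) * (q-1)) := by
    rw [hZ'']
    field_simp
    ring
  rw [hsum2, hT]
  have heq1 : e * q ≤ 1 := by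
    have := mul_le_mul_of_nonneg_right hεt hq0.le
    rw [one_div, inv_mul_cancel₀ hq0.ne'] at this
    linarith
  have heq0 : 0 ≤ e * q := mul_nonneg he0 hq0.le
  constructor
  · rw [show (1:ℝ) - 3/q = (q-3)/q by field_simp,
      div_le_div_iff₀ hq0 (by positivity)]
    nlinarith [mul_nonneg (mul_nonneg hq0.le hq0.le) (by linarith : (0:ℝ) ≤ 1 - e*q)]
  · rw [div_le_one (by positivity)]
    nlinarith
end

section
/- Let S be a finite set, D : S → [0,∞) with Σ_{x∈S} D(x) = 1, and h, c : S → {-1,1}; let ε̃ := Σ_{x : h(x) ≠ c(x)} D(x). Let 0 ≤ δ ≤ 1 and ε' ∈ (0, 2/3] satisfy |ε̃ - ε'| ≤ δ·ε', and set α' := (1/2)·ln((1-ε')/ε'). Define D'(x) := D(x)·exp(-α'·c(x)·h(x)) / (2·(1+2δ)·√(ε'·(1-ε'))) and D*(x) := D(x)·exp(-α'·c(x)·h(x)) / ((1-ε̃)·exp(-α') + ε̃·exp(α')). Then Σ_{x∈S} |D'(x) - D*(x)| ≤ 4δ. -/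
set_option maxHeartbeats 1600000 in
/-- ℓ¹ distance between the approximately normalized ('yes'-instance)
    distribution update D' and the exactly normalized update D* is at most 4δ. -/
theorem yes_instance_l1 {α : Type*} (S : Finset α) (D h c : α → ℝ)
    (hD : ∀ x ∈ S, 0 ≤ D x) (hsum : ∑ x ∈ S, D x = 1)
    (hh : ∀ x ∈ S, h x = 1 ∨ h x = -1) (hc : ∀ x ∈ S, c x = 1 ∨ c x = -1)
    (δ ε' εt : ℝ) (hεt : εt = ∑ x ∈ S.filter (fun x => h x ≠ c x), D x)
    (hδ0 : 0 ≤ δ) (hδ1 : δ ≤ 1) (hε'0 : 0 < ε') (hε'1 : ε' ≤ 2 / 3)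
    (happ : |εt - ε'| ≤ δ * ε')
    (α' : ℝ) (hα' : α' = (1 / 2) * Real.log ((1 - ε') / ε'))
    (D' Dstar : α → ℝ)
    (hD' : ∀ x ∈ S, D' x =
      D x * Real.exp (-α' * c x * h x)
        / (2 * (1 + 2 * δ) * Real.sqrt (ε' * (1 - ε'))))
    (hDstar : ∀ x ∈ S, Dstar x =
      D x * Real.exp (-α' * c x * h x)
        / ((1 - εt) * Real.exp (-α') + εt * Real.exp α')) :
    ∑ x ∈ S, |D' x - Dstar x| ≤ 4 * δ := by
  classical
  have hε'lt1 : ε' < 1 := by linarith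
  have h1ε' : 0 < 1 - ε' := by linarith
  have habs := abs_le.mp happ
  set s := Real.sqrt (ε' * (1 - ε')) with hsdef
  have hs : 0 < s := Real.sqrt_pos.mpr (by positivity)
  have hs2 : s ^ 2 = ε' * (1 - ε') := Real.sq_sqrt (by positivity)
  set p := s / (1 - ε') with hpdef
  set q := s / ε' with hqdef
  have hppos : 0 < p := div_pos hs h1ε'
  have hqpos : 0 < q := div_pos hs hε'0
  have hp : p * (1 - ε') = s := div_mul_cancel₀ s h1ε'.ne'
  have hq : q * ε' = s := div_mul_cancel₀ s hε'0.ne'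
  have ht : 0 < (1 - ε') / ε' := by positivity
  have hsqε : Real.sqrt ε' * Real.sqrt ε' = ε' := Real.mul_self_sqrt hε'0.le
  have hsmul : s = Real.sqrt ε' * Real.sqrt (1 - ε') := Real.sqrt_mul hε'0.le _
  have hexp : Real.exp α' = q := by
    rw [hα', show (1/2 : ℝ) * Real.log ((1 - ε')/ε') = Real.log ((1-ε')/ε') / 2 by ring,
      ← Real.log_sqrt ht.le, Real.exp_log (Real.sqrt_pos.mpr ht), hqdef,
      Real.sqrt_div (by linarith : (0:ℝ) ≤ 1 - ε'), hsmul,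
      div_eq_div_iff (Real.sqrt_pos.mpr hε'0).ne' hε'0.ne']
    linear_combination (-Real.sqrt (1 - ε')) * hsqε
  have hqp : q * p = 1 := by
    rw [hpdef, hqdef]
    field_simp
    nlinarith [hs2]
  have hexpneg : Real.exp (-α') = p := by
    rw [Real.exp_neg, hexp]
    exact inv_eq_of_mul_eq_one_right hqp
  clear_value s p q
  have hexph : ∀ x ∈ S, Real.exp (-α' * c x * h x) = if h x = c x then p else q := by
    intro x hx
    rcases hh x hx with h1 | h1 <;> rcases hc x hx with c1 | c1 <;>
      rw [h1, c1] <;> norm_num [hexp, hexpneg]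
  have hεt0 : 0 ≤ εt := by
    rw [hεt]
    exact Finset.sum_nonneg fun x hx => hD x (Finset.mem_filter.mp hx).1
  have hεt1 : εt ≤ 1 := by
    rw [hεt, ← hsum]
    exact Finset.sum_le_sum_of_subset_of_nonneg (Finset.filter_subset _ _)
      fun x hx _ => hD x hx
  have hsum_eq : ∑ x ∈ S.filter (fun x => h x = c x), D x = 1 - εt := by
    have hpart : ∑ x ∈ S.filter (fun x => h x = c x), D x
        + ∑ x ∈ S.filter (fun x => h x ≠ c x), D x = 1 := by
      rw [← hsum]
      exact Finset.sum_filter_add_sum_filter_not S _ D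
    rw [← hεt] at hpart
    linarith
  have hZsum : ∑ x ∈ S, D x * Real.exp (-α' * c x * h x) = (1 - εt) * p + εt * q := by
    calc ∑ x ∈ S, D x * Real.exp (-α' * c x * h x)
        = ∑ x ∈ S, (if h x = c x then D x * p else D x * q) := by
          refine Finset.sum_congr rfl fun x hx => ?_
          rw [hexph x hx, mul_ite]
      _ = (∑ x ∈ S.filter (fun x => h x = c x), D x) * p
          + (∑ x ∈ S.filter (fun x => h x ≠ c x), D x) * q := by
          rw [Finset.sum_ite, ← Finset.sum_mul, ← Finset.sum_mul]
      _ = (1 - εt) * p + εt * q := by rw [hsum_eq, ← hεt]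
  set Z : ℝ := (1 - εt) * p + εt * q with hZdef
  clear_value Z
  set W : ℝ := 2 * (1 + 2 * δ) * s with hWdef
  have hWpos : 0 < W := mul_pos (by linarith : (0:ℝ) < 2 * (1 + 2 * δ)) hs
  clear_value W
  have hZpos : 0 < Z := by
    rcases le_or_gt εt (1/2) with hcc | hcc
    · have h1 : 0 < (1 - εt) * p := mul_pos (by linarith) hppos
      have h2 : 0 ≤ εt * q := mul_nonneg hεt0 hqpos.le
      rw [hZdef]; linarith
    · have h1 : 0 ≤ (1 - εt) * p := mul_nonneg (by linarith) hppos.le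
      have h2 : 0 < εt * q := mul_pos (by linarith) hqpos
      rw [hZdef]; linarith
  have hpt : ∀ x ∈ S, |D' x - Dstar x|
      = D x * Real.exp (-α' * c x * h x) * |W⁻¹ - Z⁻¹| := by
    intro x hx
    rw [hD' x hx, hDstar x hx, hexpneg, hexp, ← hZdef]
    rw [div_eq_mul_inv, div_eq_mul_inv, ← mul_sub, abs_mul,
      abs_of_nonneg (mul_nonneg (hD x hx) (Real.exp_pos _).le)]
  have hmain : ∑ x ∈ S, |D' x - Dstar x| = Z * |W⁻¹ - Z⁻¹| := by
    rw [show Z * |W⁻¹ - Z⁻¹| = (∑ x ∈ S, D x * Real.exp (-α' * c x * h x)) * |W⁻¹ - Z⁻¹| by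
      rw [hZsum]]
    rw [Finset.sum_mul]
    exact Finset.sum_congr rfl hpt
  rw [hmain]
  have hrw : Z * |W⁻¹ - Z⁻¹| = |Z - W| / W := by
    have hZW : Z * (W⁻¹ - Z⁻¹) = (Z - W) / W := by
      rw [mul_sub, mul_inv_cancel₀ hZpos.ne', sub_div, div_self hWpos.ne', div_eq_mul_inv]
    calc Z * |W⁻¹ - Z⁻¹| = |Z * (W⁻¹ - Z⁻¹)| := by rw [abs_mul, abs_of_pos hZpos]
      _ = |Z - W| / W := by rw [hZW, abs_div, abs_of_pos hWpos]
  rw [hrw, div_le_iff₀ hWpos, abs_le]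
  clear hrw hmain hpt hZsum hsum_eq hexph hεt hsum hD hh hc hD' hDstar hα' happ
    hexp hexpneg hqp hsdef hsmul hqdef hpdef hsqε hs2 ht
  have h1 : (1 - εt) * p ≤ (1 + 2 * δ) * s := by
    have hin : 0 ≤ (1 + 2 * δ) * (1 - ε') - (1 - εt) := by nlinarith [habs.1]
    nlinarith [mul_nonneg hppos.le hin, hp]
  have h2 : εt * q ≤ (1 + δ) * s := by
    have hin : 0 ≤ (1 + δ) * ε' - εt := by linarith [habs.2]
    nlinarith [mul_nonneg hqpos.le hin, hq]
  have h3 : (1 - 2 * δ) * s ≤ (1 - εt) * p := by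
    have hin : 0 ≤ (1 - εt) - (1 - 2 * δ) * (1 - ε') := by
      nlinarith [habs.2, mul_nonneg hδ0 (by linarith : (0:ℝ) ≤ 2 - 3 * ε')]
    nlinarith [mul_nonneg hppos.le hin, hp]
  have h4 : (1 - δ) * s ≤ εt * q := by
    have hin : 0 ≤ εt - (1 - δ) * ε' := by linarith [habs.1]
    nlinarith [mul_nonneg hqpos.le hin, hq]
  constructor
  · rw [hZdef, hWdef]
    nlinarith [h3, h4, mul_nonneg hδ0 hs.le, mul_nonneg (mul_nonneg hδ0 hδ0) hs.le]
  · rw [hZdef, hWdef]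
    nlinarith [h1, h2, mul_nonneg hδ0 hs.le, mul_nonneg (mul_nonneg hδ0 hδ0) hs.le]
end

section
/- Let S be a finite set, D : S → [0,∞) with Σ_{x∈S} D(x) = 1, and h, c : S → {-1,1}; let ε̃ := Σ_{x : h(x) ≠ c(x)} D(x). Let q ≥ 3 be a real with 0 ≤ ε̃ ≤ 1/q, set ε' := 1/q, α' := (1/2)·ln(q-1), Z' := 2·(1+2/q)·√((1/q)·(1-1/q)), and Z := (1-ε̃)·(2-1/q)·exp(-α') + ε̃·(1/q)·exp(α'). Define D'(x) := D(x)·(2-1/q)·exp(-α')/Z' if h(x) = c(x), D'(x) := D(x)·(1/q)·exp(α')/Z' if h(x) ≠ c(x), and D*(x) := the same numerator as D'(x) but divided by Z instead of Z'. Then Σ_{x∈S} |D'(x) - D*(x)| ≤ 5/q. -/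
/-- ℓ¹ distance between the approximately normalized ('no'-instance)
    distribution update D' and the exactly normalized update D* is at most 5/q. -/
theorem no_instance_l1 {α : Type*} (S : Finset α) (D h c : α → ℝ)
    (hD : ∀ x ∈ S, 0 ≤ D x) (hsum : ∑ x ∈ S, D x = 1)
    (hh : ∀ x ∈ S, h x = 1 ∨ h x = -1) (hc : ∀ x ∈ S, c x = 1 ∨ c x = -1)
    (q εt : ℝ) (hq : 3 ≤ q)
    (hεt : εt = ∑ x ∈ S.filter (fun x => h x ≠ c x), D x)
    (hεtq : εt ≤ 1 / q)
    (α' Z' Z : ℝ) (hα' : α' = (1 / 2) * Real.log (q - 1))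
    (hZ' : Z' = 2 * (1 + 2 / q) * Real.sqrt ((1 / q) * (1 - 1 / q)))
    (hZ : Z = (1 - εt) * (2 - 1 / q) * Real.exp (-α') + εt * (1 / q) * Real.exp α')
    (D' Dstar : α → ℝ)
    (hD' : ∀ x ∈ S, D' x =
      if h x = c x then D x * (2 - 1 / q) * Real.exp (-α') / Z'
      else D x * (1 / q) * Real.exp α' / Z')
    (hDstar : ∀ x ∈ S, Dstar x =
      if h x = c x then D x * (2 - 1 / q) * Real.exp (-α') / Z
      else D x * (1 / q) * Real.exp α' / Z) :
    ∑ x ∈ S, |D' x - Dstar x| ≤ 5 / q := by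
  classical
  have hq0 : (0:ℝ) < q := by linarith
  have hq1 : (0:ℝ) < q - 1 := by linarith
  set r := Real.sqrt (q - 1) with hrdef
  have hr2 : r ^ 2 = q - 1 := Real.sq_sqrt (by linarith)
  have hr0 : 0 < r := Real.sqrt_pos.mpr hq1
  have hexp : Real.exp α' = r := by
    rw [hα', show (1/2 : ℝ) * Real.log (q-1) = Real.log (q-1) / 2 by ring,
        ← Real.log_sqrt (by linarith), Real.exp_log hr0]
  have hexpn : Real.exp (-α') = 1 / r := by
    rw [Real.exp_neg, hexp, one_div]
  have hsqv : Real.sqrt ((1/q) * (1 - 1/q)) = r / q := by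
    rw [show (1/q) * (1 - 1/q) = (r/q)^2 by
      field_simp
      nlinarith [hr2]]
    exact Real.sqrt_sq (by positivity)
  have hεt0 : 0 ≤ εt := by
    rw [hεt]
    exact Finset.sum_nonneg fun x hx => hD x (Finset.mem_filter.mp hx).1
  have hεt3 : εt ≤ 1/3 := le_trans hεtq (by
    rw [div_le_div_iff₀ hq0 (by norm_num)]; linarith)
  have hZ'v : Z' = 2 * (1 + 2/q) * (r/q) := by rw [hZ', hsqv]
  have hZv : Z = (1 - εt) * (2 - 1/q) * (1/r) + εt * (1/q) * r := by
    rw [hZ, hexp, hexpn]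
  have hZ'pos : 0 < Z' := by rw [hZ'v]; positivity
  have hq3 : (1:ℝ)/q ≤ 1/3 := by
    rw [div_le_div_iff₀ hq0 (by norm_num)]; linarith
  have hZpos : 0 < Z := by
    rw [hZv]
    have h1 : 0 < (1 - εt) * (2 - 1/q) * (1/r) := by
      apply mul_pos (mul_pos (by linarith) (by linarith)) (by positivity)
    have h2 : 0 ≤ εt * (1/q) * r := by positivity
    linarith
  -- pointwise formula
  have key : ∀ x ∈ S, |D' x - Dstar x| =
      (if h x = c x then D x * ((2 - 1/q) * (1/r)) else D x * ((1/q) * r)) * |1/Z' - 1/Z| := by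
    intro x hx
    have hDx := hD x hx
    rw [hD' x hx, hDstar x hx, hexp, hexpn]
    split_ifs with hcase
    · rw [show D x * (2 - 1/q) * (1/r) / Z' - D x * (2 - 1/q) * (1/r) / Z
          = (D x * ((2 - 1/q) * (1/r))) * (1/Z' - 1/Z) by ring, abs_mul,
        abs_of_nonneg (mul_nonneg hDx (mul_nonneg (by linarith [hq3]) (by positivity)))]
    · rw [show D x * (1/q) * r / Z' - D x * (1/q) * r / Z
          = (D x * ((1/q) * r)) * (1/Z' - 1/Z) by ring, abs_mul,
        abs_of_nonneg (by positivity : (0:ℝ) ≤ D x * ((1/q) * r))]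
  have hsplit : ∑ x ∈ S.filter (fun x => h x = c x), D x = 1 - εt := by
    have := Finset.sum_filter_add_sum_filter_not S (fun x => h x = c x) D
    rw [hsum] at this
    have h2 : ∑ x ∈ S.filter (fun x => ¬ h x = c x), D x = εt := by
      rw [hεt]
    linarith
  have hsumN : (∑ x ∈ S, if h x = c x then D x * ((2 - 1/q) * (1/r))
      else D x * ((1/q) * r)) = Z := by
    rw [Finset.sum_ite, ← Finset.sum_mul, ← Finset.sum_mul, hsplit,
      show (∑ x ∈ S.filter (fun x => ¬ h x = c x), D x) = εt from hεt.symm, hZv]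
    ring
  calc ∑ x ∈ S, |D' x - Dstar x|
      = ∑ x ∈ S, (if h x = c x then D x * ((2 - 1/q) * (1/r))
          else D x * ((1/q) * r)) * |1/Z' - 1/Z| := Finset.sum_congr rfl key
    _ = Z * |1/Z' - 1/Z| := by rw [← Finset.sum_mul, hsumN]
    _ ≤ 5 / q := by
        have hZrq : Z * (r * q) = 2 * q - 1 - εt * q := by
          rw [hZv]; field_simp; linear_combination εt * hr2
        have hZ'q2 : Z' * q ^ 2 = 2 * (q + 2) * r := by
          rw [hZ'v]; field_simp
        rw [show 1/Z' - 1/Z = (Z - Z') / (Z' * Z) by field_simp,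
          abs_div, abs_of_pos (mul_pos hZ'pos hZpos),
          show Z * (|Z - Z'| / (Z' * Z)) = |Z - Z'| / Z' by
            field_simp,
          div_le_iff₀ hZ'pos]
        have hpos : (0:ℝ) < r * q ^ 3 := by positivity
        rw [← mul_le_mul_iff_of_pos_right hpos]
        have e1 : |Z - Z'| * (r * q ^ 3) = |(Z - Z') * (r * q ^ 3)| := by
          rw [abs_mul, abs_of_pos hpos]
        rw [e1,
          show (Z - Z') * (r * q ^ 3) =
            q ^ 2 * (2*q - 1 - εt*q) - 2*(q+2)*(q-1)*q by
              linear_combination q ^ 2 * hZrq - r * q * hZ'q2 - 2 * (q + 2) * q * hr2,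
          show 5 / q * Z' * (r * q ^ 3) = 10 * (q + 2) * (q - 1) by
            field_simp
            linear_combination 5 * r * hZ'q2 + 10 * (q + 2) * hr2]
        rw [abs_le]
        have h1 : εt * q ≤ 1 := by
          rw [← le_div_iff₀ hq0]; exact hεtq
        have h2 : εt * q * q ^ 2 ≤ 1 * q ^ 2 :=
          mul_le_mul_of_nonneg_right h1 (sq_nonneg q)
        have h3 : 0 ≤ εt * q * q ^ 2 :=
          mul_nonneg (mul_nonneg hεt0 hq0.le) (sq_nonneg q)
        clear hD hsum hh hc hεt hD' hDstar key hsplit hsumN hZ hZ' hZv hZ'v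
          hexp hexpn hsqv hα' hZrq hZ'q2 e1 hZ'pos hZpos hεtq h1
        constructor
        · nlinarith [h2, sq_nonneg q]
        · nlinarith [h3, sq_nonneg (q - 3)]
end

section
/- Let S be a finite set, D : S → [0,∞) with Σ_{x∈S} D(x) = 1, and h, c : S → {-1,1}; let ε̃ := Σ_{x : h(x) ≠ c(x)} D(x). Let 0 ≤ δ ≤ 1/5 and ε' ∈ (0, 2/3] satisfy |ε̃ - ε'| ≤ δ·ε', and set α' := (1/2)·ln((1-ε')/ε'). Define D'(x) := D(x)·exp(-α'·c(x)·h(x)) / (2·(1+2δ)·√(ε'·(1-ε'))) and D*(x) := D(x)·exp(-α'·c(x)·h(x)) / ((1-ε̃)·exp(-α') + ε̃·exp(α')). Then Σ_{x∈S} √(D'(x)·D*(x)) ≥ 1 - 3δ. -/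
private lemma yes_fid_aux1 (δ e t : ℝ) (hδ0 : 0 ≤ δ) (hδ1 : δ ≤ 1 / 5)
    (he0 : 0 < e) (he1 : e ≤ 2 / 3)
    (h1 : -(δ * e) ≤ t - e) (h2 : t - e ≤ δ * e) :
    2 * (1 - δ) * (e * (1 - e)) ≤ (1 - t) * e + t * (1 - e) := by
  rcases le_or_gt e (1/2) with hhalf | hhalf
  · nlinarith [mul_nonneg (show 0 ≤ t - e + δ * e by linarith)
      (show 0 ≤ 1 - 2 * e by linarith), mul_nonneg hδ0 he0.le]
  · nlinarith [mul_nonneg (show 0 ≤ δ * e - (t - e) by linarith)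
      (show 0 ≤ 2 * e - 1 by linarith), mul_nonneg hδ0 he0.le]

private lemma yes_fid_aux2 (δ : ℝ) (hδ0 : 0 ≤ δ) (hδ1 : δ ≤ 1 / 5) :
    (1 - 3 * δ) ^ 2 * (2 * (1 + 2 * δ)) ≤ 2 * (1 - δ) := by
  nlinarith [mul_nonneg hδ0 hδ0, mul_nonneg (mul_nonneg hδ0 hδ0) hδ0]

/-- Fidelity-type overlap between the approximately normalized
    ('yes'-instance) update D' and the exactly normalized update D* is at
    least 1 - 3δ. -/
theorem yes_instance_fidelity {α : Type*} (S : Finset α) (D h c : α → ℝ)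
    (hD : ∀ x ∈ S, 0 ≤ D x) (hsum : ∑ x ∈ S, D x = 1)
    (hh : ∀ x ∈ S, h x = 1 ∨ h x = -1) (hc : ∀ x ∈ S, c x = 1 ∨ c x = -1)
    (δ ε' εt : ℝ) (hεt : εt = ∑ x ∈ S.filter (fun x => h x ≠ c x), D x)
    (hδ0 : 0 ≤ δ) (hδ1 : δ ≤ 1 / 5) (hε'0 : 0 < ε') (hε'1 : ε' ≤ 2 / 3)
    (happ : |εt - ε'| ≤ δ * ε')
    (α' : ℝ) (hα' : α' = (1 / 2) * Real.log ((1 - ε') / ε'))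
    (D' Dstar : α → ℝ)
    (hD' : ∀ x ∈ S, D' x =
      D x * Real.exp (-α' * c x * h x)
        / (2 * (1 + 2 * δ) * Real.sqrt (ε' * (1 - ε'))))
    (hDstar : ∀ x ∈ S, Dstar x =
      D x * Real.exp (-α' * c x * h x)
        / ((1 - εt) * Real.exp (-α') + εt * Real.exp α')) :
    1 - 3 * δ ≤ ∑ x ∈ S, Real.sqrt (D' x * Dstar x) := by
  have hε'lt1 : ε' < 1 := by linarith
  have h1ε' : 0 < 1 - ε' := by linarith
  have habs := abs_le.mp happ
  have hεt_lb : (1 - δ) * ε' ≤ εt := by nlinarith [habs.1]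
  have hεt_ub : εt ≤ (1 + δ) * ε' := by nlinarith [habs.2]
  have hεt0 : 0 < εt := by nlinarith
  have hεt1 : εt < 1 := by nlinarith
  set A := Real.exp α' with hA
  set B := Real.exp (-α') with hB
  have hApos : 0 < A := Real.exp_pos _
  have hBpos : 0 < B := Real.exp_pos _
  have hBA : B = A⁻¹ := by rw [hB, hA, Real.exp_neg]
  have hA2 : A ^ 2 = (1 - ε') / ε' := by
    rw [hA, ← Real.exp_nat_mul]
    have h2 : (2 : ℝ) * α' = Real.log ((1 - ε') / ε') := by rw [hα']; ring
    push_cast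
    rw [h2, Real.exp_log (div_pos h1ε' hε'0)]
  set s := Real.sqrt (ε' * (1 - ε')) with hs
  have hprod : 0 < ε' * (1 - ε') := mul_pos hε'0 h1ε'
  have hs2 : s ^ 2 = ε' * (1 - ε') := Real.sq_sqrt hprod.le
  have hspos : 0 < s := Real.sqrt_pos.mpr hprod
  have hsA : s * A = 1 - ε' := by
    have hsq : (s * A) ^ 2 = (1 - ε') ^ 2 := by
      rw [mul_pow, hs2, hA2]; field_simp
    have h1 : s * A = Real.sqrt ((s * A) ^ 2) := (Real.sqrt_sq (by positivity)).symm
    rw [h1, hsq, Real.sqrt_sq h1ε'.le]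
  have hsB : s * B = ε' := by
    have h2 : s * B * A = ε' * A := by
      rw [hBA]; field_simp
      nlinarith [hsA, hA2]
    exact mul_right_cancel₀ (ne_of_gt hApos) h2
  set Zs := (1 - εt) * B + εt * A with hZs
  have hZspos : 0 < Zs := by
    have h1 : 0 < (1 - εt) * B := mul_pos (by linarith) hBpos
    have h2 : 0 < εt * A := mul_pos hεt0 hApos
    linarith
  set Z' := 2 * (1 + 2 * δ) * s with hZ'
  have hZ'pos : 0 < Z' := by positivity
  -- sum of the unnormalized weights equals Zs
  have hsumE : ∑ x ∈ S, D x * Real.exp (-α' * c x * h x) = Zs := by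
    rw [← Finset.sum_filter_add_sum_filter_not S (fun x => h x ≠ c x)]
    have h1 : ∑ x ∈ S.filter (fun x => h x ≠ c x), D x * Real.exp (-α' * c x * h x)
        = εt * A := by
      rw [hεt, Finset.sum_mul]
      apply Finset.sum_congr rfl
      intro x hx
      obtain ⟨hxS, hne⟩ := Finset.mem_filter.mp hx
      have hch : c x * h x = -1 := by
        rcases hh x hxS with h1 | h1 <;> rcases hc x hxS with h2 | h2 <;>
          simp [h1, h2] at hne ⊢ <;> norm_num
      rw [show -α' * c x * h x = -α' * (c x * h x) by ring, hch]
      simp [hA]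
    have h2 : ∑ x ∈ S.filter (fun x => ¬ h x ≠ c x), D x * Real.exp (-α' * c x * h x)
        = (1 - εt) * B := by
      have hDs : ∑ x ∈ S.filter (fun x => ¬ h x ≠ c x), D x = 1 - εt := by
        have hsplit := Finset.sum_filter_add_sum_filter_not S (fun x => h x ≠ c x) D
        rw [hsum, ← hεt] at hsplit
        linarith
      rw [← hDs, Finset.sum_mul]
      apply Finset.sum_congr rfl
      intro x hx
      obtain ⟨hxS, heq⟩ := Finset.mem_filter.mp hx
      push_neg at heq
      have hch : c x * h x = 1 := by
        rcases hh x hxS with h1 | h1 <;> rcases hc x hxS with h2 | h2 <;>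
          rw [h1, h2] at heq ⊢ <;> linarith
      rw [show -α' * c x * h x = -α' * (c x * h x) by ring, hch, mul_one]
    rw [h1, h2]; ring
  -- each term of the fidelity sum
  have hterm : ∀ x ∈ S, Real.sqrt (D' x * Dstar x)
      = D x * Real.exp (-α' * c x * h x) / Real.sqrt (Z' * Zs) := by
    intro x hx
    rw [hD' x hx, hDstar x hx]
    have hDx := hD x hx
    have ha : 0 ≤ D x * Real.exp (-α' * c x * h x) := by positivity
    rw [div_mul_div_comm, Real.sqrt_div (mul_nonneg ha ha), Real.sqrt_mul_self ha]
  have hsum2 : ∑ x ∈ S, Real.sqrt (D' x * Dstar x) = Zs / Real.sqrt (Z' * Zs) := by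
    rw [Finset.sum_congr rfl hterm, ← Finset.sum_div, hsumE]
  rw [hsum2]
  -- key inequality : (1-3δ)^2 * Z' ≤ Zs
  have hN : s * Zs = (1 - εt) * ε' + εt * (1 - ε') := by
    calc s * Zs = (1 - εt) * (s * B) + εt * (s * A) := by rw [hZs]; ring
      _ = (1 - εt) * ε' + εt * (1 - ε') := by rw [hsB, hsA]
  have hN2 : 2 * (1 - δ) * s ^ 2 ≤ s * Zs := by
    rw [hN, hs2]
    exact yes_fid_aux1 δ ε' εt hδ0 hδ1 hε'0 hε'1 habs.1 habs.2
  have hZslb : 2 * (1 - δ) * s ≤ Zs := by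
    have h3 : s * (2 * (1 - δ) * s) ≤ s * Zs := by
      have he : s * (2 * (1 - δ) * s) = 2 * (1 - δ) * s ^ 2 := by ring
      rw [he]; exact hN2
    exact le_of_mul_le_mul_left h3 hspos
  have hcoef : (1 - 3 * δ) ^ 2 * (2 * (1 + 2 * δ)) ≤ 2 * (1 - δ) :=
    yes_fid_aux2 δ hδ0 hδ1
  have hkey : (1 - 3 * δ) ^ 2 * Z' ≤ Zs := by
    calc (1 - 3 * δ) ^ 2 * Z' = ((1 - 3 * δ) ^ 2 * (2 * (1 + 2 * δ))) * s := by
          rw [hZ']; ring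
      _ ≤ (2 * (1 - δ)) * s := mul_le_mul_of_nonneg_right hcoef hspos.le
      _ ≤ Zs := hZslb
  have hszpos : 0 < Real.sqrt Zs := Real.sqrt_pos.mpr hZspos
  have hsZ'pos : 0 < Real.sqrt Z' := Real.sqrt_pos.mpr hZ'pos
  have hfrac : Zs / Real.sqrt (Z' * Zs) = Real.sqrt Zs / Real.sqrt Z' := by
    rw [Real.sqrt_mul hZ'pos.le]
    rw [div_eq_div_iff (by positivity) hsZ'pos.ne']
    have he : Real.sqrt Zs * (Real.sqrt Z' * Real.sqrt Zs)
        = Real.sqrt Z' * (Real.sqrt Zs * Real.sqrt Zs) := by ring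
    rw [he, Real.mul_self_sqrt hZspos.le, mul_comm]
  rw [hfrac, le_div_iff₀ hsZ'pos]
  have hle := Real.sqrt_le_sqrt hkey
  rw [Real.sqrt_mul (sq_nonneg _), Real.sqrt_sq (by linarith : (0:ℝ) ≤ 1 - 3 * δ)] at hle
  exact hle
end

section
/- Let S be a finite set, D : S → [0,∞) with Σ_{x∈S} D(x) = 1, and h, c : S → {-1,1}; let ε̃ := Σ_{x : h(x) ≠ c(x)} D(x). Let q ≥ 3 be a real with 0 ≤ ε̃ ≤ 1/q, set ε' := 1/q, α' := (1/2)·ln(q-1), Z' := 2·(1+2/q)·√((1/q)·(1-1/q)), and Z := (1-ε̃)·(2-1/q)·exp(-α') + ε̃·(1/q)·exp(α'). Define D'(x) := D(x)·(2-1/q)·exp(-α')/Z' if h(x) = c(x), D'(x) := D(x)·(1/q)·exp(α')/Z' if h(x) ≠ c(x), and D*(x) := the same numerator as D'(x) but divided by Z instead of Z'. Then Σ_{x∈S} √(D'(x)·D*(x)) ≥ 1 - 2/q. -/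
private lemma sqrt_div_mul_div (a Z' Z : ℝ) (ha : 0 ≤ a) :
    Real.sqrt (a / Z' * (a / Z)) = a / Real.sqrt (Z' * Z) := by
  rw [show a / Z' * (a / Z) = a ^ 2 / (Z' * Z) by ring,
    Real.sqrt_div (by positivity), Real.sqrt_sq ha]

private lemma key_poly (q s u : ℝ) (hq : 3 ≤ q) (hs : 0 < s) (hs2 : s ^ 2 = q - 1)
    (hu : 2 * (q - 1) / q ≤ u) :
    2 * (1 + 2 / q) * s / q * (u / s) ≤ (u / s / (1 - 2 / q)) ^ 2 := by
  have hq0 : (0:ℝ) < q := by linarith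
  have hq2 : (0:ℝ) < q - 2 := by linarith
  have hq1 : (0:ℝ) < q - 1 := by linarith
  have hqu : 2 * (q - 1) ≤ q * u := by
    rw [div_le_iff₀ hq0] at hu; linarith [hu]
  have hu0 : 0 < u := by nlinarith
  have hL : 2 * (1 + 2 / q) * s / q * (u / s) = 2 * (q + 2) * u / q ^ 2 := by
    field_simp
  have hR : (u / s / (1 - 2 / q)) ^ 2 = u ^ 2 * q ^ 2 / ((q - 1) * (q - 2) ^ 2) := by
    rw [show (1 - 2 / q) = (q - 2) / q by field_simp, ← hs2]
    field_simp
  rw [hL, hR, div_le_div_iff₀ (by positivity) (by positivity)]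
  nlinarith [mul_nonneg (mul_nonneg hu0.le hq0.le) (sub_nonneg.mpr hqu),
    mul_pos (mul_pos hq0 hq0) hq0, mul_pos hu0 hq0, sq_nonneg (q - 3)]

/-- Fidelity-type overlap between the approximately normalized
    ('no'-instance) update D' and the exactly normalized update D* is at
    least 1 - 2/q. -/
theorem no_instance_fidelity {α : Type*} (S : Finset α) (D h c : α → ℝ)
    (hD : ∀ x ∈ S, 0 ≤ D x) (hsum : ∑ x ∈ S, D x = 1)
    (hh : ∀ x ∈ S, h x = 1 ∨ h x = -1) (hc : ∀ x ∈ S, c x = 1 ∨ c x = -1)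
    (q εt : ℝ) (hq : 3 ≤ q)
    (hεt : εt = ∑ x ∈ S.filter (fun x => h x ≠ c x), D x)
    (hεtq : εt ≤ 1 / q)
    (α' Z' Z : ℝ) (hα' : α' = (1 / 2) * Real.log (q - 1))
    (hZ' : Z' = 2 * (1 + 2 / q) * Real.sqrt ((1 / q) * (1 - 1 / q)))
    (hZ : Z = (1 - εt) * (2 - 1 / q) * Real.exp (-α') + εt * (1 / q) * Real.exp α')
    (D' Dstar : α → ℝ)
    (hD' : ∀ x ∈ S, D' x =
      if h x = c x then D x * (2 - 1 / q) * Real.exp (-α') / Z'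
      else D x * (1 / q) * Real.exp α' / Z')
    (hDstar : ∀ x ∈ S, Dstar x =
      if h x = c x then D x * (2 - 1 / q) * Real.exp (-α') / Z
      else D x * (1 / q) * Real.exp α' / Z) :
    1 - 2 / q ≤ ∑ x ∈ S, Real.sqrt (D' x * Dstar x) := by
  classical
  have hq0 : (0:ℝ) < q := by linarith
  have hq1 : (0:ℝ) < q - 1 := by linarith
  set s := Real.sqrt (q - 1) with hs
  have hs0 : 0 < s := Real.sqrt_pos.mpr hq1
  have hs2 : s ^ 2 = q - 1 := Real.sq_sqrt hq1.le
  have hexp : Real.exp α' = s := by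
    rw [hα', hs, Real.sqrt_eq_rpow, Real.rpow_def_of_pos hq1, mul_comm]
  have hexpneg : Real.exp (-α') = 1 / s := by
    rw [Real.exp_neg, hexp, one_div]
  have hεt0 : 0 ≤ εt := by
    rw [hεt]; exact Finset.sum_nonneg fun x hx => hD x (Finset.mem_filter.mp hx).1
  have h1q : 1 / q ≤ 1 / 3 := by
    apply one_div_le_one_div_of_le <;> linarith
  have hZval : Z = (2 - 1 / q - εt) / s := by
    rw [hZ, hexp, hexpneg]
    field_simp
    linear_combination εt * hs2
  have hsq : Real.sqrt ((1 / q) * (1 - 1 / q)) = s / q := by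
    have heq : (1 / q) * (1 - 1 / q) = (s / q) ^ 2 := by
      rw [div_pow, hs2, eq_div_iff (by positivity : (q:ℝ)^2 ≠ 0)]
      field_simp
    rw [heq]
    exact Real.sqrt_sq (by positivity)
  have hZ'val : Z' = 2 * (1 + 2 / q) * s / q := by
    rw [hZ', hsq]; ring
  have hZpos : 0 < Z := by
    rw [hZval]; apply div_pos _ hs0; linarith
  have hZ'pos : 0 < Z' := by rw [hZ'val]; positivity
  have h12q : 0 < 1 - 2 / q := by
    rw [sub_pos]; exact (div_lt_one hq0).mpr (by linarith)
  have hnotfilter : (∑ x ∈ S.filter (fun x => ¬ h x = c x), D x) = εt := by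
    rw [hεt]
  have hsplit : (∑ x ∈ S.filter (fun x => h x = c x), D x) = 1 - εt := by
    have h3 := Finset.sum_filter_add_sum_filter_not S (fun x => h x = c x) D
    rw [hnotfilter, hsum] at h3
    linarith
  have hmain : ∑ x ∈ S, Real.sqrt (D' x * Dstar x)
      = (∑ x ∈ S, (if h x = c x then D x * (2 - 1 / q) * Real.exp (-α')
          else D x * (1 / q) * Real.exp α')) / Real.sqrt (Z' * Z) := by
    rw [Finset.sum_div]
    refine Finset.sum_congr rfl fun x hx => ?_
    rw [hD' x hx, hDstar x hx]
    by_cases hcase : h x = c x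
    · simp only [hcase, if_true]
      exact sqrt_div_mul_div _ _ _
        (mul_nonneg (mul_nonneg (hD x hx) (by linarith)) (Real.exp_pos _).le)
    · simp only [hcase, if_false]
      exact sqrt_div_mul_div _ _ _
        (mul_nonneg (mul_nonneg (hD x hx) (by positivity)) (Real.exp_pos _).le)
  have hsumN : (∑ x ∈ S, (if h x = c x then D x * (2 - 1 / q) * Real.exp (-α')
      else D x * (1 / q) * Real.exp α')) = Z := by
    simp only [mul_assoc]
    rw [Finset.sum_ite, ← Finset.sum_mul, ← Finset.sum_mul, hsplit, hnotfilter, hZ]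
    ring
  have hu : 2 * (q - 1) / q ≤ 2 - 1 / q - εt := by
    have h4 : 2 * (q - 1) / q = 2 - 2 / q := by field_simp
    rw [h4]
    have : 2 / q = 1 / q + 1 / q := by ring
    linarith [hεtq]
  have hkey : Z' * Z ≤ (Z / (1 - 2 / q)) ^ 2 := by
    rw [hZval, hZ'val]
    exact key_poly q s (2 - 1 / q - εt) hq hs0 hs2 hu
  have hsqrtle : Real.sqrt (Z' * Z) ≤ Z / (1 - 2 / q) :=
    calc Real.sqrt (Z' * Z) ≤ Real.sqrt ((Z / (1 - 2 / q)) ^ 2) := Real.sqrt_le_sqrt hkey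
    _ = Z / (1 - 2 / q) := Real.sqrt_sq (by positivity)
  have hsqrtpos : 0 < Real.sqrt (Z' * Z) := Real.sqrt_pos.mpr (by positivity)
  rw [hmain, hsumN, le_div_iff₀ hsqrtpos]
  calc (1 - 2 / q) * Real.sqrt (Z' * Z) ≤ (1 - 2 / q) * (Z / (1 - 2 / q)) :=
        mul_le_mul_of_nonneg_left hsqrtle h12q.le
    _ = Z := by rw [mul_comm, div_mul_cancel₀ _ h12q.ne']
end

section
/- Let S be a finite nonempty set of size M, let D¹(x) := 1/M for all x ∈ S, let c : S → {-1,1}, and for t = 1,…,T let h_t : S → {-1,1}, α_t ∈ ℝ, and Z_t > 0, with distributions defined recursively by D^{t+1}(x) := D^t(x)·exp(-α_t·c(x)·h_t(x)) / Z_t. If Σ_{x∈S} D^{T+1}(x) ≤ 1, then (1/M)·|{x ∈ S : c(x)·Σ_{t=1}^T α_t·h_t(x) ≤ 0}| ≤ Π_{t=1}^T Z_t. -/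
/-- AdaBoost training-error bound: unrolling the recursive exponential
    distribution update, the fraction of training points on which the
    combined hypothesis has nonpositive margin is at most the product of the
    normalization factors. -/
theorem adaboost_training_error {α : Type*} (S : Finset α) (hS : S.Nonempty)
    (T : ℕ) (c : α → ℝ) (hc : ∀ x ∈ S, c x = 1 ∨ c x = -1)
    (h : ℕ → α → ℝ)
    (hh : ∀ t ∈ Finset.Icc 1 T, ∀ x ∈ S, h t x = 1 ∨ h t x = -1)
    (a Z : ℕ → ℝ) (hZ : ∀ t ∈ Finset.Icc 1 T, 0 < Z t)
    (D : ℕ → α → ℝ)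
    (hD1 : ∀ x ∈ S, D 1 x = 1 / (S.card : ℝ))
    (hrec : ∀ t ∈ Finset.Icc 1 T, ∀ x ∈ S,
      D (t + 1) x = D t x * Real.exp (-(a t) * c x * h t x) / Z t)
    (hsub : ∑ x ∈ S, D (T + 1) x ≤ 1) :
    (1 / (S.card : ℝ)) *
        ((S.filter (fun x => c x * ∑ t ∈ Finset.Icc 1 T, a t * h t x ≤ 0)).card : ℝ)
      ≤ ∏ t ∈ Finset.Icc 1 T, Z t := by
  have hM : (0 : ℝ) < (S.card : ℝ) := by
    exact_mod_cast Finset.card_pos.mpr hS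
  -- closed form
  have key : ∀ t, t ≤ T → ∀ x ∈ S,
      D (t + 1) x = (1 / (S.card : ℝ)) *
        Real.exp (-(c x) * ∑ s ∈ Finset.Icc 1 t, a s * h s x) /
        ∏ s ∈ Finset.Icc 1 t, Z s := by
    intro t
    induction t with
    | zero =>
      intro _ x hx
      simp [hD1 x hx]
    | succ n ih =>
      intro hn x hx
      have hmem : n + 1 ∈ Finset.Icc 1 T := by
        simp [Nat.succ_le_iff]; omega
      have hrec' := hrec (n + 1) hmem x hx
      rw [hrec', ih (by omega) x hx]
      rw [Finset.sum_Icc_succ_top (by omega), Finset.prod_Icc_succ_top (by omega),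
        mul_add, Real.exp_add,
        show -c x * (a (n+1) * h (n+1) x) = -(a (n+1)) * c x * h (n+1) x from by ring]
      have hz : Z (n+1) ≠ 0 := (hZ _ hmem).ne'
      field_simp
  have hprodpos : (0 : ℝ) < ∏ t ∈ Finset.Icc 1 T, Z t :=
    Finset.prod_pos fun t ht => hZ t ht
  set B := S.filter (fun x => c x * ∑ t ∈ Finset.Icc 1 T, a t * h t x ≤ 0) with hB
  have hlow : ∀ x ∈ B, (1 / (S.card : ℝ)) / ∏ t ∈ Finset.Icc 1 T, Z t ≤ D (T + 1) x := by
    intro x hx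
    obtain ⟨hxS, hxm⟩ := Finset.mem_filter.mp hx
    rw [key T le_rfl x hxS]
    rw [div_le_div_iff₀ hprodpos hprodpos]
    have h1 : (1 : ℝ) ≤ Real.exp (-(c x) * ∑ s ∈ Finset.Icc 1 T, a s * h s x) := by
      apply Real.one_le_exp
      nlinarith
    nlinarith [mul_le_mul_of_nonneg_right h1
      (le_of_lt (mul_pos (by positivity : (0:ℝ) < 1 / (S.card : ℝ)) hprodpos))]
  have hnn : ∀ x ∈ S, 0 ≤ D (T + 1) x := by
    intro x hx
    rw [key T le_rfl x hx]
    positivity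
  have hsumB : ∑ x ∈ B, D (T + 1) x ≤ ∑ x ∈ S, D (T + 1) x :=
    Finset.sum_le_sum_of_subset_of_nonneg (Finset.filter_subset _ _)
      (fun x hx _ => hnn x hx)
  have hcard : (B.card : ℝ) * ((1 / (S.card : ℝ)) / ∏ t ∈ Finset.Icc 1 T, Z t) ≤ 1 := by
    have hs := Finset.sum_le_sum hlow
    rw [Finset.sum_const, nsmul_eq_mul] at hs
    exact le_trans hs (le_trans hsumB hsub)
  rw [mul_div_assoc', div_le_one hprodpos] at hcard
  rw [mul_comm]
  exact hcard
end

section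
/- Let 0 ≤ δ ≤ 1/10 and 0 < γ ≤ 1/2. Let ε, ε̃, ε' be reals with 0 ≤ ε ≤ 1/2 - γ, |ε̃ - ε| ≤ 4δ, ε' > 0, and |ε̃ - ε'| ≤ δ·ε'. Then 2·√(ε'·(1-ε')) ≤ √(1 - 4·γ² + 300·δ). -/
/-- Per-round bound on the approximate normalization factor 2√(ε'(1-ε')). -/
theorem per_round_normalizer_bound (δ γ ε εt ε' : ℝ)
    (hδ0 : 0 ≤ δ) (hδ1 : δ ≤ 1 / 10) (hγ0 : 0 < γ) (hγ1 : γ ≤ 1 / 2)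
    (hε0 : 0 ≤ ε) (hε1 : ε ≤ 1 / 2 - γ)
    (h1 : |εt - ε| ≤ 4 * δ) (hε'0 : 0 < ε') (h2 : |εt - ε'| ≤ δ * ε') :
    2 * Real.sqrt (ε' * (1 - ε')) ≤ Real.sqrt (1 - 4 * γ ^ 2 + 300 * δ) := by
  rw [abs_le] at h1 h2
  have hb : ε' * (1 - δ) ≤ ε + 4 * δ := by nlinarith [h1.2, h2.1]
  have key : 4 * (ε' * (1 - ε')) ≤ 1 - 4 * γ ^ 2 + 300 * δ := by
    rcases le_or_gt (2 * γ) (9 * δ) with h | h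
    · nlinarith [sq_nonneg (2 * ε' - 1)]
    · nlinarith [sq_nonneg (2 * γ - 9 * δ), sq_nonneg (ε' * (1 - δ) - (1/2 - γ + 4*δ)),
        mul_nonneg hγ0.le hδ0]
  have h4 : Real.sqrt (4 * (ε' * (1 - ε'))) = 2 * Real.sqrt (ε' * (1 - ε')) := by
    rw [show (4:ℝ) * (ε' * (1 - ε')) = 2^2 * (ε' * (1 - ε')) by ring,
      Real.sqrt_mul (by positivity), Real.sqrt_sq (by norm_num)]
  rw [← h4]
  exact Real.sqrt_le_sqrt key
end

section
/- Let Q ≥ 1 and T ≥ 1 be integers, let δ := 1/(10·Q·T²), and let 0 < γ ≤ 1/2. Then ((1+2δ)·√(1 - 4·γ² + 300·δ))^T ≤ exp(-2·T·γ² + 16/(Q·T)). -/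
/-- Product over T rounds of the modified normalization factors is at most
    exp(-2Tγ² + 16/(QT)), with δ = 1/(10QT²). -/
theorem product_normalizer_bound (Q T : ℕ) (hQ : 1 ≤ Q) (hT : 1 ≤ T)
    (γ : ℝ) (hγ0 : 0 < γ) (hγ1 : γ ≤ 1 / 2) :
    ((1 + 2 * (1 / (10 * (Q : ℝ) * (T : ℝ) ^ 2)))
        * Real.sqrt (1 - 4 * γ ^ 2 + 300 * (1 / (10 * (Q : ℝ) * (T : ℝ) ^ 2)))) ^ T
      ≤ Real.exp (-2 * (T : ℝ) * γ ^ 2 + 16 / ((Q : ℝ) * (T : ℝ))) := by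
  have hQ' : (1:ℝ) ≤ Q := by exact_mod_cast hQ
  have hT' : (1:ℝ) ≤ T := by exact_mod_cast hT
  have hQ0 : (0:ℝ) < Q := by linarith
  have hT0 : (0:ℝ) < T := by linarith
  set d : ℝ := 1 / (10 * (Q : ℝ) * (T : ℝ) ^ 2) with hd
  have hd0 : 0 < d := by positivity
  -- per-round bound
  have hsqrt : Real.sqrt (1 - 4 * γ ^ 2 + 300 * d)
      ≤ Real.exp (-2 * γ ^ 2 + 150 * d) := by
    have h2 : 1 - 4 * γ ^ 2 + 300 * d
        ≤ (Real.exp (-2 * γ ^ 2 + 150 * d)) ^ 2 := by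
      have := Real.add_one_le_exp (-4 * γ ^ 2 + 300 * d)
      have hsq : (Real.exp (-2 * γ ^ 2 + 150 * d)) ^ 2
          = Real.exp (-4 * γ ^ 2 + 300 * d) := by
        rw [← Real.exp_nat_mul]; ring_nf
      rw [hsq]; linarith
    calc Real.sqrt (1 - 4 * γ ^ 2 + 300 * d)
        ≤ Real.sqrt ((Real.exp (-2 * γ ^ 2 + 150 * d)) ^ 2) :=
          Real.sqrt_le_sqrt h2
      _ = Real.exp (-2 * γ ^ 2 + 150 * d) :=
          Real.sqrt_sq (Real.exp_nonneg _)
  have hlin : 1 + 2 * d ≤ Real.exp (2 * d) := by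
    have := Real.add_one_le_exp (2 * d); linarith
  have hbase : (1 + 2 * d) * Real.sqrt (1 - 4 * γ ^ 2 + 300 * d)
      ≤ Real.exp (-2 * γ ^ 2 + 152 * d) := by
    have h := mul_le_mul hlin hsqrt (Real.sqrt_nonneg _) (Real.exp_nonneg _)
    rw [← Real.exp_add] at h
    calc (1 + 2 * d) * Real.sqrt (1 - 4 * γ ^ 2 + 300 * d)
        ≤ Real.exp (2 * d + (-2 * γ ^ 2 + 150 * d)) := h
      _ = Real.exp (-2 * γ ^ 2 + 152 * d) := by ring_nf
  have hbase0 : 0 ≤ (1 + 2 * d) * Real.sqrt (1 - 4 * γ ^ 2 + 300 * d) := by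
    positivity
  have hpow : ((1 + 2 * d) * Real.sqrt (1 - 4 * γ ^ 2 + 300 * d)) ^ T
      ≤ Real.exp ((T : ℝ) * (-2 * γ ^ 2 + 152 * d)) := by
    rw [Real.exp_nat_mul]
    exact pow_le_pow_left₀ hbase0 hbase T
  refine hpow.trans (Real.exp_le_exp.mpr ?_)
  have hTd : (T : ℝ) * (152 * d) = 152 / (10 * (Q : ℝ) * (T : ℝ)) := by
    rw [hd]; field_simp
  have h16 : 152 / (10 * (Q : ℝ) * (T : ℝ)) ≤ 16 / ((Q : ℝ) * (T : ℝ)) := by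
    rw [div_le_div_iff₀ (by positivity) (by positivity)]
    nlinarith
  calc (T : ℝ) * (-2 * γ ^ 2 + 152 * d)
      = -2 * (T : ℝ) * γ ^ 2 + (T : ℝ) * (152 * d) := by ring
    _ ≤ -2 * (T : ℝ) * γ ^ 2 + 16 / ((Q : ℝ) * (T : ℝ)) := by
        rw [hTd]; linarith
end
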